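/- The U(L)-module Ω(α,β,γ,λ,g) = ℂ[s,t] with the actions L_n f(s,t)=λ^n(s+nα)f(s-n,t), d_n f = λ^nβ^{-1}(tg(t)+γ)f(s-n,t)+λ^n t∂_t f(s-n,t), a_n f = λ^n t f(s-n,t), b_n f = λ^n g(t)f(s-n,t)+λ^nβ∂_t f(s-n,t), c_n f = -λ^nβ f(s-n,t) is a simple U(L)-module, and it is free of rank 1 as a module over U(ℂL₀⊕ℂa₀). -/

import Mathlib

/- STATEMENT 12: the `U(L)`-module `Ω(α,β,γ,λ,g) = ℂ[s,t]` with the actions below is a simple `U(L)`-module, and it is free of rank 1 as a `U(B)`-module, `B = ℂL₀ ⊕ ℂa₀`: the map `ℂ[u₀,u₁] ≅ U(B) → Ω`, `p ↦ p(L₀, a₀)·1`, is bijective. -/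
noncomputable section

open Polynomial

/-- `Ω = ℂ[s,t]`, realized as `(ℂ[s])[t]`: the outer variable is `t`,
the inner variable is `s`. -/
abbrev Om : Type := Polynomial (Polynomial ℂ)

/-- substitution `s ↦ s - n` (leaving `t` fixed). -/
noncomputable def shS (n : ℤ) (f : Om) : Om :=
  Polynomial.map ((Polynomial.aeval (Polynomial.X - Polynomial.C (n : ℂ))).toRingHom) f

/-- a polynomial `g(t) ∈ ℂ[t]` viewed in `Ω`. -/
noncomputable def tPoly (g : Polynomial ℂ) : Om := g.map (Polynomial.C : ℂ →+* Polynomial ℂ)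

/-- action of `L_n`: `f(s,t) ↦ λ^n (s + nα) f(s-n, t)`. -/
noncomputable def wL (α lam : ℂ) (n : ℤ) (f : Om) : Om :=
  (lam ^ n) • (Polynomial.C (Polynomial.X + Polynomial.C ((n : ℂ) * α)) * shS n f)

/-- action of `d_n`: `f ↦ λ^n β⁻¹ (t g(t) + γ) f(s-n,t) + λ^n t ∂_t f(s-n,t)`. -/
noncomputable def wD (β γ lam : ℂ) (g : Polynomial ℂ) (n : ℤ) (f : Om) : Om :=
  (lam ^ n * β⁻¹) • ((Polynomial.X * tPoly g + Polynomial.C (Polynomial.C γ)) * shS n f)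
    + (lam ^ n) • (Polynomial.X * Polynomial.derivative (shS n f))

/-- action of `a_n`: `f ↦ λ^n t f(s-n,t)`. -/
noncomputable def wA (lam : ℂ) (n : ℤ) (f : Om) : Om :=
  (lam ^ n) • (Polynomial.X * shS n f)

/-- action of `b_n`: `f ↦ λ^n g(t) f(s-n,t) + λ^n β ∂_t f(s-n,t)`. -/
noncomputable def wB (β lam : ℂ) (g : Polynomial ℂ) (n : ℤ) (f : Om) : Om :=
  (lam ^ n) • (tPoly g * shS n f) + (lam ^ n * β) • Polynomial.derivative (shS n f)

/-- action of `c_n`: `f ↦ -λ^n β f(s-n,t)`. -/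
noncomputable def wC (β lam : ℂ) (n : ℤ) (f : Om) : Om :=
  (-(lam ^ n) * β) • shS n f

/-! ### Auxiliary lemmas -/

lemma shS_zero (f : Om) : shS 0 f = f := by
  simp [shS, Polynomial.aeval_X_left]

lemma shS_C (n : ℤ) (p : Polynomial ℂ) :
    shS n (Polynomial.C p) = Polynomial.C (p.comp (Polynomial.X - Polynomial.C (n : ℂ))) := by
  simp [shS, Polynomial.comp_eq_aeval]

lemma shS_neg_one_C (p : Polynomial ℂ) :
    shS (-1) (Polynomial.C p) = Polynomial.C (p.comp (Polynomial.X + Polynomial.C 1)) := by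
  rw [shS_C]; norm_num

lemma wL_zero (α lam : ℂ) (f : Om) :
    wL α lam 0 f = Polynomial.C Polynomial.X * f := by
  simp [wL, shS_zero]

lemma wA_zero (lam : ℂ) (f : Om) : wA lam 0 f = Polynomial.X * f := by
  simp [wA, shS_zero]

lemma wB_zero (β lam : ℂ) (g : Polynomial ℂ) (f : Om) :
    wB β lam g 0 f = tPoly g * f + β • Polynomial.derivative f := by
  simp [wB, shS_zero]

lemma wC_eq (β lam : ℂ) (n : ℤ) (f : Om) :
    wC β lam n f = (-(lam ^ n) * β) • shS n f := rfl

lemma smul_mem_cancel (N : Submodule ℂ Om) {c : ℂ} (hc : c ≠ 0) {x : Om}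
    (h : c • x ∈ N) : x ∈ N := by
  have := N.smul_mem c⁻¹ h
  rwa [smul_smul, inv_mul_cancel₀ hc, one_smul] at this

lemma deriv_ne_zero {f : Om} (h0 : f.natDegree ≠ 0) : Polynomial.derivative f ≠ 0 := by
  intro h
  exact h0 (Polynomial.natDegree_eq_zero_of_derivative_eq_zero h)

lemma natDegree_eq_zero_of_comp_shift (p : Polynomial ℂ)
    (h : p.comp (Polynomial.X + Polynomial.C 1) = p) : p.natDegree = 0 := by
  have key : ∀ n : ℕ, p.eval ((n : ℂ)) = p.eval 0 := by
    intro n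
    induction n with
    | zero => norm_num
    | succ n ih =>
      have := congrArg (Polynomial.eval (n : ℂ)) h
      rw [Polynomial.eval_comp] at this
      simp only [Polynomial.eval_add, Polynomial.eval_X, Polynomial.eval_C] at this
      rw [← ih, ← this]; push_cast; ring_nf
  have hz : (p - Polynomial.C (p.eval 0)) = 0 := by
    apply Polynomial.eq_zero_of_infinite_isRoot
    have hsub : Set.range ((↑) : ℕ → ℂ) ⊆ {x | (p - Polynomial.C (p.eval 0)).IsRoot x} := by
      rintro x ⟨n, rfl⟩
      simp [Polynomial.IsRoot, key n]
    exact (Set.infinite_range_of_injective (Nat.cast_injective (R := ℂ))).mono hsub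
  have : p = Polynomial.C (p.eval 0) := by linear_combination (norm := ring_nf) hz
  rw [this, Polynomial.natDegree_C]

lemma comp_shift_sub_natDegree_lt (p : Polynomial ℂ) (h0 : p.natDegree ≠ 0) :
    (p.comp (Polynomial.X + Polynomial.C 1) - p).natDegree < p.natDegree := by
  set q := p.comp (Polynomial.X + Polynomial.C 1) - p with hq
  have hcompdeg : (p.comp (Polynomial.X + Polynomial.C 1)).natDegree = p.natDegree := by
    rw [Polynomial.natDegree_comp, Polynomial.natDegree_X_add_C, mul_one]
  have hcoeff : q.coeff p.natDegree = 0 := by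
    have h1 : (p.comp (Polynomial.X + Polynomial.C 1)).coeff p.natDegree
        = (p.comp (Polynomial.X + Polynomial.C 1)).leadingCoeff := by
      rw [Polynomial.leadingCoeff, hcompdeg]
    have h2 : (p.comp (Polynomial.X + Polynomial.C 1)).leadingCoeff = p.leadingCoeff := by
      rw [Polynomial.leadingCoeff_comp (by rw [Polynomial.natDegree_X_add_C]; exact one_ne_zero),
        (Polynomial.monic_X_add_C (1 : ℂ)).leadingCoeff, one_pow, mul_one]
    rw [hq, Polynomial.coeff_sub, h1, h2, Polynomial.leadingCoeff, sub_self]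
  have hle : q.natDegree ≤ p.natDegree := by
    have h := Polynomial.natDegree_sub_le (p.comp (Polynomial.X + Polynomial.C 1)) p
    rw [hcompdeg, max_self] at h; exact h
  rcases eq_or_ne q 0 with hq0 | hq0
  · rw [hq0, Polynomial.natDegree_zero]; exact Nat.pos_of_ne_zero h0
  · refine lt_of_le_of_ne hle fun hEq => ?_
    exact (Polynomial.leadingCoeff_ne_zero.mpr hq0)
      (by rw [Polynomial.leadingCoeff, hEq]; exact hcoeff)

lemma tPoly_monomial_mul (m : ℕ) (c : ℂ) (f : Om) :
    tPoly (Polynomial.monomial m c) * f = c • (Polynomial.X ^ m * f) := by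
  rw [tPoly, Polynomial.map_monomial, ← Polynomial.C_mul_X_pow_eq_monomial,
    Algebra.smul_def, Polynomial.algebraMap_apply]
  simp only [Polynomial.algebraMap_eq]
  ring

lemma C_monomial_mul (m n : ℕ) (c : ℂ) :
    (Polynomial.C (Polynomial.monomial m c) : Om) * Polynomial.X ^ n
      = c • (Polynomial.C Polynomial.X ^ m * (Polynomial.X ^ n * 1)) := by
  rw [← Polynomial.C_mul_X_pow_eq_monomial, Algebra.smul_def, Polynomial.algebraMap_apply]
  simp only [Polynomial.algebraMap_eq, map_mul, map_pow]
  ring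

lemma reduce_t (N : Submodule ℂ Om) (hder : ∀ f ∈ N, Polynomial.derivative f ∈ N) :
    ∀ (d : ℕ) (f : Om), f.natDegree ≤ d → f ∈ N → f ≠ 0 →
      ∃ p : Polynomial ℂ, p ≠ 0 ∧ Polynomial.C p ∈ N := by
  intro d
  induction d with
  | zero =>
    intro f hd hf hne
    have h0 : f.natDegree = 0 := Nat.le_zero.mp hd
    have hf' : f = Polynomial.C (f.coeff 0) := Polynomial.eq_C_of_natDegree_eq_zero h0
    exact ⟨f.coeff 0, fun hc => hne (by rw [hf', hc, Polynomial.C_0]), by rwa [hf'] at hf⟩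
  | succ d ih =>
    intro f hd hf hne
    by_cases h0 : f.natDegree = 0
    · have hf' : f = Polynomial.C (f.coeff 0) := Polynomial.eq_C_of_natDegree_eq_zero h0
      exact ⟨f.coeff 0, fun hc => hne (by rw [hf', hc, Polynomial.C_0]), by rwa [hf'] at hf⟩
    · refine ih (Polynomial.derivative f) ?_ (hder f hf) (deriv_ne_zero h0)
      have := Polynomial.natDegree_derivative_lt h0
      omega

lemma reduce_s (N : Submodule ℂ Om)
    (hshift : ∀ p : Polynomial ℂ, Polynomial.C p ∈ N →
      Polynomial.C (p.comp (Polynomial.X + Polynomial.C 1)) ∈ N) :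
    ∀ (d : ℕ) (p : Polynomial ℂ), p.natDegree ≤ d → p ≠ 0 → Polynomial.C p ∈ N →
      (1 : Om) ∈ N := by
  have base : ∀ p : Polynomial ℂ, p.natDegree = 0 → p ≠ 0 → Polynomial.C p ∈ N →
      (1 : Om) ∈ N := by
    intro p h0 hne hp
    have hp' : p = Polynomial.C (p.coeff 0) := Polynomial.eq_C_of_natDegree_eq_zero h0
    have hc : p.coeff 0 ≠ 0 := fun hc => hne (by rw [hp', hc, Polynomial.C_0])
    rw [hp'] at hp
    have heq : (p.coeff 0)⁻¹ • (Polynomial.C (Polynomial.C (p.coeff 0)) : Om) = 1 := by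
      rw [Algebra.smul_def, Polynomial.algebraMap_apply]
      simp only [Polynomial.algebraMap_eq, ← map_mul]
      rw [inv_mul_cancel₀ hc, map_one, map_one]
    have hmem := N.smul_mem (p.coeff 0)⁻¹ hp
    rwa [heq] at hmem
  intro d
  induction d with
  | zero =>
    intro p hd hne hp
    exact base p (Nat.le_zero.mp hd) hne hp
  | succ d ih =>
    intro p hd hne hp
    by_cases h0 : p.natDegree = 0
    · exact base p h0 hne hp
    · set q := p.comp (Polynomial.X + Polynomial.C 1) - p with hqdef
      have hqmem : Polynomial.C q ∈ N := by
        rw [hqdef, map_sub]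
        exact N.sub_mem (hshift p hp) hp
      have hqne : q ≠ 0 := fun h =>
        h0 (natDegree_eq_zero_of_comp_shift p (by rwa [sub_eq_zero] at h))
      have hqd : q.natDegree ≤ d := by
        have hlt := comp_shift_sub_natDegree_lt p h0
        rw [← hqdef] at hlt
        omega
      exact ih q hqd hqne hqmem

lemma wL_zero_iter (α lam : ℂ) (k : ℕ) (f : Om) :
    (wL α lam 0)^[k] f = Polynomial.C Polynomial.X ^ k * f := by
  induction k with
  | zero => simp
  | succ k ih => rw [Function.iterate_succ_apply', ih, wL_zero, pow_succ]; ring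

lemma wA_zero_iter (lam : ℂ) (k : ℕ) (f : Om) :
    (wA lam 0)^[k] f = Polynomial.X ^ k * f := by
  induction k with
  | zero => simp
  | succ k ih => rw [Function.iterate_succ_apply', ih, wA_zero, pow_succ]; ring

def vOm : Fin 2 → Om := ![Polynomial.C Polynomial.X, Polynomial.X]

noncomputable def eOm : MvPolynomial (Fin 2) ℂ ≃ₐ[ℂ] Om :=
  (MvPolynomial.renameEquiv ℂ (Equiv.swap 0 1)).trans <|
    (MvPolynomial.finSuccEquiv ℂ 1).trans <|
      Polynomial.mapAlgEquiv <|
        (MvPolynomial.finSuccEquiv ℂ 0).trans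
          (Polynomial.mapAlgEquiv (MvPolynomial.isEmptyAlgEquiv ℂ (Fin 0)))

lemma eOm_X (i : Fin 2) : eOm (MvPolynomial.X i) = vOm i := by
  fin_cases i
  · show eOm (MvPolynomial.X 0) = Polynomial.C Polynomial.X
    rw [show eOm (MvPolynomial.X 0)
        = Polynomial.mapAlgEquiv ((MvPolynomial.finSuccEquiv ℂ 0).trans
            (Polynomial.mapAlgEquiv (MvPolynomial.isEmptyAlgEquiv ℂ (Fin 0))))
          (MvPolynomial.finSuccEquiv ℂ 1
            (MvPolynomial.rename (Equiv.swap (0 : Fin 2) 1) (MvPolynomial.X 0))) from rfl]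
    rw [MvPolynomial.rename_X, Equiv.swap_apply_left,
      show (1 : Fin 2) = Fin.succ 0 from rfl, MvPolynomial.finSuccEquiv_X_succ,
      Polynomial.coe_mapAlgEquiv, Polynomial.map_C]
    have h : ((MvPolynomial.finSuccEquiv ℂ 0).trans
        (Polynomial.mapAlgEquiv (MvPolynomial.isEmptyAlgEquiv ℂ (Fin 0))))
          (MvPolynomial.X 0) = Polynomial.X := by
      rw [AlgEquiv.trans_apply, MvPolynomial.finSuccEquiv_X_zero,
        Polynomial.coe_mapAlgEquiv, Polynomial.map_X]
    exact congrArg Polynomial.C h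
  · show eOm (MvPolynomial.X 1) = Polynomial.X
    rw [show eOm (MvPolynomial.X 1)
        = Polynomial.mapAlgEquiv ((MvPolynomial.finSuccEquiv ℂ 0).trans
            (Polynomial.mapAlgEquiv (MvPolynomial.isEmptyAlgEquiv ℂ (Fin 0))))
          (MvPolynomial.finSuccEquiv ℂ 1
            (MvPolynomial.rename (Equiv.swap (0 : Fin 2) 1) (MvPolynomial.X 1))) from rfl]
    rw [MvPolynomial.rename_X, Equiv.swap_apply_right, MvPolynomial.finSuccEquiv_X_zero,
      Polynomial.coe_mapAlgEquiv, Polynomial.map_X]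

lemma eOm_eq_aeval (p : MvPolynomial (Fin 2) ℂ) : eOm p = MvPolynomial.aeval vOm p := by
  have : (eOm : MvPolynomial (Fin 2) ℂ →ₐ[ℂ] Om) = MvPolynomial.aeval vOm := by
    apply MvPolynomial.algHom_ext
    intro i
    simpa using eOm_X i
  exact congrArg (fun f => f p) (congrArg DFunLike.coe this)

lemma F_eq_eOm (α lam : ℂ) (p : MvPolynomial (Fin 2) ℂ) :
    (Finsupp.sum (AddMonoidAlgebra.coeff p) fun mo c => c • ((wL α lam 0)^[mo 0] ((wA lam 0)^[mo 1] (1 : Om))))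
      = eOm p := by
  rw [eOm_eq_aeval, MvPolynomial.aeval_def, MvPolynomial.eval₂_eq]
  rw [Finsupp.sum]
  refine Finset.sum_congr rfl fun d _ => ?_
  rw [wA_zero_iter, wL_zero_iter, mul_one]
  have hprod : (∏ i ∈ d.support, vOm i ^ d i) = ∏ i : Fin 2, vOm i ^ d i :=
    Finsupp.prod_pow d vOm
  rw [hprod, Fin.prod_univ_two]
  rw [Algebra.smul_def]
  simp only [vOm, Matrix.cons_val_zero, Matrix.cons_val_one, Matrix.head_cons]
  rfl

theorem Omega_simple_and_UB_free_rank_one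
    (α γ β lam : ℂ) (hβ : β ≠ 0) (hlam : lam ≠ 0) (g : Polynomial ℂ) :
    (∀ N : Submodule ℂ Om,
        (∀ (n : ℤ), ∀ f ∈ N, wL α lam n f ∈ N ∧ wD β γ lam g n f ∈ N ∧
          wA lam n f ∈ N ∧ wB β lam g n f ∈ N ∧ wC β lam n f ∈ N) →
        N = ⊥ ∨ N = ⊤) ∧
    Function.Bijective (fun p : MvPolynomial (Fin 2) ℂ =>
      Finsupp.sum (AddMonoidAlgebra.coeff p) fun mo c => c • ((wL α lam 0)^[mo 0] ((wA lam 0)^[mo 1] (1 : Om)))) := by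
  constructor
  · intro N hN
    by_cases hbot : N = ⊥
    · exact Or.inl hbot
    right
    -- a nonzero element of N
    obtain ⟨f, hfN, hfne⟩ : ∃ f ∈ N, f ≠ 0 := by
      by_contra h
      push_neg at h
      apply hbot
      rw [Submodule.eq_bot_iff]
      exact h
    -- closure properties
    have hXm : ∀ f ∈ N, Polynomial.X * f ∈ N := fun f hf => by
      have := (hN 0 f hf).2.2.1; rwa [wA_zero] at this
    have hCXm : ∀ f ∈ N, Polynomial.C Polynomial.X * f ∈ N := fun f hf => by
      have := (hN 0 f hf).1; rwa [wL_zero] at this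
    have hXpow : ∀ (k : ℕ), ∀ f ∈ N, Polynomial.X ^ k * f ∈ N := by
      intro k
      induction k with
      | zero => intro f hf; simpa using hf
      | succ k ih =>
        intro f hf
        have := ih (Polynomial.X * f) (hXm f hf)
        rwa [show Polynomial.X ^ (k + 1) * f = Polynomial.X ^ k * (Polynomial.X * f) by ring]
    have hCXpow : ∀ (k : ℕ), ∀ f ∈ N, Polynomial.C Polynomial.X ^ k * f ∈ N := by
      intro k
      induction k with
      | zero => intro f hf; simpa using hf
      | succ k ih =>
        intro f hf
        have := ih (Polynomial.C Polynomial.X * f) (hCXm f hf)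
        rwa [show Polynomial.C Polynomial.X ^ (k + 1) * f
          = Polynomial.C Polynomial.X ^ k * (Polynomial.C Polynomial.X * f) by ring]
    have htmul : ∀ (q : Polynomial ℂ), ∀ f ∈ N, tPoly q * f ∈ N := by
      intro q
      induction q using Polynomial.induction_on' with
      | add a b ha hb =>
        intro f hf
        have : tPoly (a + b) = tPoly a + tPoly b := Polynomial.map_add _
        rw [this, add_mul]
        exact N.add_mem (ha f hf) (hb f hf)
      | monomial m c =>
        intro f hf
        rw [tPoly_monomial_mul]
        exact N.smul_mem _ (hXpow m f hf)
    have hder : ∀ f ∈ N, Polynomial.derivative f ∈ N := by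
      intro f hf
      have h := (hN 0 f hf).2.2.2.1
      rw [wB_zero] at h
      have h2 := N.sub_mem h (htmul g f hf)
      rw [add_sub_cancel_left] at h2
      exact smul_mem_cancel N hβ h2
    have hshift : ∀ p : Polynomial ℂ, Polynomial.C p ∈ N →
        Polynomial.C (p.comp (Polynomial.X + Polynomial.C 1)) ∈ N := by
      intro p hp
      have h := (hN (-1) (Polynomial.C p) hp).2.2.2.2
      rw [wC_eq] at h
      have h2 := smul_mem_cancel N
        (mul_ne_zero (neg_ne_zero.mpr (zpow_ne_zero _ hlam)) hβ) h
      rwa [shS_neg_one_C] at h2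
    obtain ⟨p, hpne, hpN⟩ := reduce_t N hder f.natDegree f le_rfl hfN hfne
    have h1 : (1 : Om) ∈ N := reduce_s N hshift p.natDegree p le_rfl hpne hpN
    -- everything is in N
    have key : ∀ (q : Polynomial ℂ) (n : ℕ), (Polynomial.C q : Om) * Polynomial.X ^ n ∈ N := by
      intro q
      induction q using Polynomial.induction_on' with
      | add a b ha hb =>
        intro n
        rw [map_add, add_mul]
        exact N.add_mem (ha n) (hb n)
      | monomial m c =>
        intro n
        rw [C_monomial_mul]
        exact N.smul_mem _ (hCXpow m _ (hXpow n _ h1))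
    rw [eq_top_iff]
    intro x _
    induction x using Polynomial.induction_on' with
    | add a b ha hb => exact N.add_mem (ha trivial) (hb trivial)
    | monomial n a =>
      rw [← Polynomial.C_mul_X_pow_eq_monomial]
      exact key a n
  · have hF : (fun p : MvPolynomial (Fin 2) ℂ =>
        Finsupp.sum (AddMonoidAlgebra.coeff p) fun mo c => c • ((wL α lam 0)^[mo 0] ((wA lam 0)^[mo 1] (1 : Om))))
          = ⇑eOm := funext (F_eq_eOm α lam)
    rw [hF]
    exact eOm.bijective

end
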